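/- Let n ≥ 1, α > 0 and q < 0. Then ∫_{ℝⁿ} (1 − (q/α)|x|^α)^{1/q − n/α − 1} dx = π^{n/2} B(n/α, 1 − 1/q) / ((α/n)·(−q/α)^{n/α}·Γ(n/2 + 1)) (note that 1 − (q/α)|x|^α = 1 + (|q|/α)|x|^α > 0 for all x). Equivalently, with Z(α,q) := (α/n)(−q/α)^{n/α}Γ(n/2+1)/(π^{n/2}B(n/α, 1 − 1/q)), the function g_{α,q}(x) = Z(α,q)^{-1}·(1 − (q/α)|x|^α)^{1/q − n/α − 1} is a probability density on ℝⁿ. -/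

import Mathlib

open MeasureTheory Real Set

lemma betaReal (a b : ℝ) (ha : 0 < a) (hb : 0 < b) :
    ∫ x in Ioo (0:ℝ) 1, x ^ (a - 1) * (1 - x) ^ (b - 1)
      = Real.Gamma a * Real.Gamma b / Real.Gamma (a + b) := by
  have hint : Complex.betaIntegral a b
      = ((∫ x in (0:ℝ)..1, x ^ (a - 1) * (1 - x) ^ (b - 1) : ℝ) : ℂ) := by
    rw [← intervalIntegral.integral_ofReal]
    refine intervalIntegral.integral_congr fun x hx => ?_
    rw [uIcc_of_le zero_le_one] at hx
    rw [Complex.ofReal_mul, Complex.ofReal_cpow hx.1,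
      Complex.ofReal_cpow (by linarith [hx.2] : (0:ℝ) ≤ 1 - x)]
    push_cast
    ring
  have key := Complex.Gamma_mul_Gamma_eq_betaIntegral
    (s := (a : ℂ)) (t := (b : ℂ)) (by simpa using ha) (by simpa using hb)
  rw [hint, ← Complex.ofReal_add, Complex.Gamma_ofReal, Complex.Gamma_ofReal,
    Complex.Gamma_ofReal, ← Complex.ofReal_mul, ← Complex.ofReal_mul] at key
  have keyR : Real.Gamma a * Real.Gamma b
      = Real.Gamma (a + b) * ∫ x in (0:ℝ)..1, x ^ (a - 1) * (1 - x) ^ (b - 1) :=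
    Complex.ofReal_injective key
  have hne : Real.Gamma (a + b) ≠ 0 := (Real.Gamma_pos_of_pos (by linarith)).ne'
  rw [← integral_Ioc_eq_integral_Ioo, ← intervalIntegral.integral_of_le zero_le_one,
    eq_div_iff hne, keyR]
  ring

lemma betaIoi (a b : ℝ) (ha : 0 < a) (hb : 0 < b) :
    ∫ u in Ioi (0:ℝ), u ^ (a - 1) * (1 + u) ^ (-(a + b))
      = Real.Gamma a * Real.Gamma b / Real.Gamma (a + b) := by
  have himg : (fun v : ℝ => v / (1 - v)) '' Ioo 0 1 = Ioi 0 := by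
    ext u
    constructor
    · rintro ⟨v, hv, rfl⟩
      exact div_pos hv.1 (by linarith [hv.2])
    · intro hu
      refine ⟨u / (1 + u), ⟨div_pos hu (by linarith [mem_Ioi.mp hu]), ?_⟩, ?_⟩
      · rw [div_lt_one (by linarith [mem_Ioi.mp hu])]; linarith [mem_Ioi.mp hu]
      · have h1 : (0:ℝ) < 1 + u := by linarith [mem_Ioi.mp hu]
        field_simp
        ring
  have hderiv : ∀ v ∈ Ioo (0:ℝ) 1,
      HasDerivWithinAt (fun v : ℝ => v / (1 - v)) (((1 - v) ^ 2)⁻¹) (Ioo 0 1) v := by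
    intro v hv
    have h1 : (1:ℝ) - v ≠ 0 := by have := hv.2; intro h; rw [sub_eq_zero] at h; linarith
    have := (hasDerivAt_id v).div ((hasDerivAt_const v (1:ℝ)).sub (hasDerivAt_id v)) h1
    exact (this.congr_deriv (by simp only [Pi.sub_apply, id]; ring)).hasDerivWithinAt
  have hinj : InjOn (fun v : ℝ => v / (1 - v)) (Ioo 0 1) := by
    intro v hv w hw h
    have h1 : (1:ℝ) - v ≠ 0 := by have := hv.2; intro hc; rw [sub_eq_zero] at hc; linarith
    have h2 : (1:ℝ) - w ≠ 0 := by have := hw.2; intro hc; rw [sub_eq_zero] at hc; linarith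
    have := (div_eq_div_iff h1 h2).mp h
    nlinarith [this]
  rw [← himg, integral_image_eq_integral_abs_deriv_smul measurableSet_Ioo hderiv hinj,
    ← betaReal a b ha hb]
  refine setIntegral_congr_fun measurableSet_Ioo fun v hv => ?_
  have hv0 : (0:ℝ) < v := hv.1
  have ht : (0:ℝ) < 1 - v := by linarith [hv.2]
  have h1 : 1 + v / (1 - v) = (1 - v)⁻¹ := by field_simp; ring
  rw [smul_eq_mul, h1, abs_of_pos (by positivity), div_rpow hv0.le ht.le,
    inv_rpow ht.le, ← rpow_neg ht.le, neg_neg, div_eq_mul_inv, ← rpow_neg ht.le,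
    ← rpow_natCast (1 - v) 2, ← rpow_neg ht.le]
  push_cast
  rw [mul_assoc (v ^ (a - 1)), ← rpow_add ht, mul_left_comm, ← rpow_add ht]
  congr 1
  ring

/-- For `n ≥ 1`, `α > 0` and `q < 0`, the integral over `ℝⁿ` of
`(1 − (q/α)|x|^α)^(1/q − n/α − 1)` equals
`π^(n/2) B(n/α, 1 − 1/q) / ((α/n)(−q/α)^(n/α) Γ(n/2+1))`,
where `B(x,y) = Γ(x)Γ(y)/Γ(x+y)`. -/
theorem generalized_gaussian_partition_function_neg
    (n : ℕ) (hn : 1 ≤ n) (α q : ℝ) (hα : 0 < α) (hq : q < 0) :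
    (∫ x : EuclideanSpace ℝ (Fin n),
        (1 - q / α * ‖x‖ ^ α) ^ (1 / q - (n : ℝ) / α - 1))
      = Real.pi ^ ((n : ℝ) / 2) *
          (Real.Gamma ((n : ℝ) / α) * Real.Gamma (1 - 1 / q) /
            Real.Gamma ((n : ℝ) / α + (1 - 1 / q))) /
        (α / (n : ℝ) * (-(q / α)) ^ ((n : ℝ) / α) * Real.Gamma ((n : ℝ) / 2 + 1)) := by
  haveI : Nonempty (Fin n) := Fin.pos_iff_nonempty.mp hn
  have hn0 : (0:ℝ) < (n:ℝ) := by exact_mod_cast hn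
  set c : ℝ := -(q / α) with hc
  have hc0 : 0 < c := by
    have : q / α < 0 := div_neg_of_neg_of_pos hq hα
    simp only [hc]; linarith
  set a : ℝ := (n : ℝ) / α with ha
  set b : ℝ := 1 - 1 / q with hb
  have ha0 : 0 < a := div_pos hn0 hα
  have hb0 : 0 < b := by
    have : 1 / q < 0 := one_div_neg.mpr hq
    simp only [hb]; linarith
  have hsab : 1 / q - (n : ℝ) / α - 1 = -(a + b) := by simp only [ha, hb]; ring
  -- the beta value
  set B : ℝ := Real.Gamma a * Real.Gamma b / Real.Gamma (a + b) with hB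
  -- Step 1: reduce to radial integral
  have hE : Module.finrank ℝ (EuclideanSpace ℝ (Fin n)) = n := finrank_euclideanSpace_fin
  have step1 := MeasureTheory.integral_fun_norm_addHaar (volume : Measure (EuclideanSpace ℝ (Fin n)))
    (fun r : ℝ => (1 - q / α * r ^ α) ^ (1 / q - (n : ℝ) / α - 1))
  rw [hE] at step1
  rw [step1]
  -- Step 2: volume of unit ball
  have hvol : ((volume : Measure (EuclideanSpace ℝ (Fin n))) (Metric.ball 0 1)).toReal
      = Real.pi ^ ((n : ℝ) / 2) / Real.Gamma ((n : ℝ) / 2 + 1) := by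
    rw [EuclideanSpace.volume_ball]
    simp only [Fintype.card_fin, ENNReal.ofReal_one, one_pow, one_mul]
    rw [ENNReal.toReal_ofReal (by positivity)]
    congr 1
    rw [← Real.rpow_natCast (√π) n, Real.sqrt_eq_rpow, ← Real.rpow_mul pi_pos.le]
    congr 1
    ring
  -- Step 3: compute the radial integral
  have hrad : (∫ y in Ioi (0:ℝ), y ^ (n - 1) • (1 - q / α * y ^ α) ^ (1 / q - (n : ℝ) / α - 1))
      = α⁻¹ * c ^ (-a) * B := by
    set G : ℝ → ℝ := fun t => α⁻¹ * (t ^ (a - 1) * (1 + c * t) ^ (-(a + b))) with hG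
    have e1 : (∫ y in Ioi (0:ℝ), y ^ (n - 1) • (1 - q / α * y ^ α) ^ (1 / q - (n : ℝ) / α - 1))
        = ∫ y in Ioi (0:ℝ), (|α| * y ^ (α - 1)) • G (y ^ α) := by
      refine setIntegral_congr_fun measurableSet_Ioi fun y hy => ?_
      have hy0 : (0:ℝ) < y := hy
      have hya : (0:ℝ) < y ^ α := rpow_pos_of_pos hy0 α
      simp only [hG, smul_eq_mul, abs_of_pos hα]
      rw [← Real.rpow_natCast y (n - 1), Nat.cast_sub hn, Nat.cast_one,
        ← Real.rpow_mul hy0.le, hsab]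
      have h2 : 1 - q / α * y ^ α = 1 + c * y ^ α := by simp only [hc]; ring
      rw [h2]
      rw [show α * (a - 1) = (n:ℝ) - α from by simp only [ha]; field_simp]
      have hmerge : y ^ (α - 1) * y ^ ((n:ℝ) - α) = y ^ ((n:ℝ) - 1) := by
        rw [← Real.rpow_add hy0]; norm_num
      rw [← hmerge]
      field_simp
    rw [e1, MeasureTheory.integral_comp_rpow_Ioi G hα.ne']
    simp only [hG]
    rw [MeasureTheory.integral_const_mul]
    set H : ℝ → ℝ := fun u => u ^ (a - 1) * (1 + u) ^ (-(a + b)) with hH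
    have e2 : (∫ t in Ioi (0:ℝ), t ^ (a - 1) * (1 + c * t) ^ (-(a + b)))
        = c ^ ((1:ℝ) - a) * ∫ t in Ioi (0:ℝ), H (c * t) := by
      rw [← integral_const_mul]
      refine setIntegral_congr_fun measurableSet_Ioi fun t ht => ?_
      have ht0 : (0:ℝ) < t := ht
      simp only [hH]
      rw [mul_rpow hc0.le ht0.le, ← mul_assoc, ← mul_assoc, ← Real.rpow_add hc0]
      norm_num
    have e3 : (∫ t in Ioi (0:ℝ), H (c * t)) = c⁻¹ • ∫ u in Ioi (c * 0), H u :=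
      integral_comp_mul_left_Ioi H 0 hc0
    rw [e2, e3, mul_zero, smul_eq_mul, hH, betaIoi a b ha0 hb0, ← hB,
      ← Real.rpow_neg_one c]
    rw [show c ^ ((1:ℝ) - a) * (c ^ (-1:ℝ) * B) = c ^ ((1:ℝ) - a) * c ^ (-1:ℝ) * B from by ring,
      ← Real.rpow_add hc0, show (1:ℝ) - a + -1 = -a from by ring]
    ring
  rw [hrad, measureReal_def, hvol, nsmul_eq_mul, smul_eq_mul]
  have hΓ : 0 < Real.Gamma ((n : ℝ) / 2 + 1) := Real.Gamma_pos_of_pos (by positivity)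
  have hca : 0 < c ^ a := rpow_pos_of_pos hc0 a
  rw [rpow_neg hc0.le]
  field_simp
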